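/- Let σ > 0, r > 0, λ > 0, K > 0 and μ₁ < μ₀ with η = (μ₀ − μ₁)/σ. Let ν₁ = μ₁/σ − σ/2, γ = (√(ν₁² + 2r) − ν₁)/σ, ν₀ = μ₀/σ − σ/2, β = (√(ν₀² + 2(r+λ)) − ν₀)/σ, and assume λ ≠ σηγ with E = λ/(λ − σηγ). Fix x₁ > 0 and F ∈ ℝ, and define v₀(x) = E(x₁ − K)(x/x₁)^γ + F(x/x₁)^β and v₁(x) = (x₁ − K)(x/x₁)^γ for x > 0. Then for every x ∈ (0, x₁), μ₀ x v₀′(x) + (1/2)σ² x² v₀″(x) − (r+λ) v₀(x) = −λ v₁(x), and v₀(x) → 0 as x → 0⁺. -/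

import Mathlib

/-- Derivative of `c * (z/x₁)^p` on `z > 0`. -/
lemma stmt5_aux (x₁ c p z : ℝ) (hx₁ : 0 < x₁) (hz : 0 < z) :
    HasDerivAt (fun y : ℝ => c * (y / x₁) ^ p)
      (c * p * (z / x₁) ^ (p - 1) / x₁) z := by
  have h1 : HasDerivAt (fun y : ℝ => y / x₁) (1 / x₁) z := by
    simpa using (hasDerivAt_id z).div_const x₁
  have h2 := (Real.hasDerivAt_rpow_const
      (x := z / x₁) (p := p) (Or.inl (div_pos hz hx₁).ne')).comp z h1
  have h3 := h2.const_mul c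
  exact h3.congr_deriv (by ring)

set_option maxHeartbeats 1000000 in
/-- verification of the first branch of the state-0 value function
v₀(x) = E(x₁−K)(x/x₁)^γ + F(x/x₁)^β: it satisfies
μ₀ x v₀′ + (1/2)σ² x² v₀″ − (r+λ)v₀ = −λ v₁ on (0,x₁) and v₀(x) → 0 as x → 0⁺. -/
theorem stmt5 (σ r lam K μ₀ μ₁ : ℝ) (hσ : 0 < σ) (hr : 0 < r) (hlam : 0 < lam)
    (hK : 0 < K) (hμ : μ₁ < μ₀) (η : ℝ) (hη : η = (μ₀ - μ₁) / σ)
    (ν₁ γ ν₀ β : ℝ)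
    (hν₁ : ν₁ = μ₁ / σ - σ / 2)
    (hγ : γ = (Real.sqrt (ν₁ ^ 2 + 2 * r) - ν₁) / σ)
    (hν₀ : ν₀ = μ₀ / σ - σ / 2)
    (hβ : β = (Real.sqrt (ν₀ ^ 2 + 2 * (r + lam)) - ν₀) / σ)
    (hne : lam ≠ σ * η * γ) (E : ℝ) (hE : E = lam / (lam - σ * η * γ))
    (x₁ : ℝ) (hx₁ : 0 < x₁) (F : ℝ)
    (v₀ v₁ : ℝ → ℝ)
    (hv₀ : v₀ = fun x => E * (x₁ - K) * (x / x₁) ^ γ + F * (x / x₁) ^ β)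
    (hv₁ : v₁ = fun x => (x₁ - K) * (x / x₁) ^ γ) :
    (∀ x ∈ Set.Ioo (0 : ℝ) x₁,
      μ₀ * x * deriv v₀ x + (1 / 2) * σ ^ 2 * x ^ 2 * deriv (deriv v₀) x
        - (r + lam) * v₀ x = -lam * v₁ x) ∧
    Filter.Tendsto v₀ (nhdsWithin 0 (Set.Ioi 0)) (nhds 0) := by
  have hσ' : σ ≠ 0 := hσ.ne'
  have hx₁' : x₁ ≠ 0 := hx₁.ne'
  -- square-root facts
  have hs1 : Real.sqrt (ν₁ ^ 2 + 2 * r) ^ 2 = ν₁ ^ 2 + 2 * r :=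
    Real.sq_sqrt (by positivity)
  have hs0 : Real.sqrt (ν₀ ^ 2 + 2 * (r + lam)) ^ 2 = ν₀ ^ 2 + 2 * (r + lam) :=
    Real.sq_sqrt (by positivity)
  have hsγ : σ * γ + ν₁ = Real.sqrt (ν₁ ^ 2 + 2 * r) := by
    rw [hγ]; field_simp; ring
  have hsβ : σ * β + ν₀ = Real.sqrt (ν₀ ^ 2 + 2 * (r + lam)) := by
    rw [hβ]; field_simp; ring
  have hqγ : σ ^ 2 * γ ^ 2 + 2 * σ * ν₁ * γ = 2 * r := by
    linear_combination hs1 + (σ * γ + ν₁ + Real.sqrt (ν₁ ^ 2 + 2 * r)) * hsγ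
  have hqβ : σ ^ 2 * β ^ 2 + 2 * σ * ν₀ * β = 2 * (r + lam) := by
    linear_combination hs0 + (σ * β + ν₀ + Real.sqrt (ν₀ ^ 2 + 2 * (r + lam))) * hsβ
  have hσν₁ : σ * ν₁ = μ₁ - σ ^ 2 / 2 := by rw [hν₁]; field_simp
  have hσν₀ : σ * ν₀ = μ₀ - σ ^ 2 / 2 := by rw [hν₀]; field_simp
  have hση : σ * η = μ₀ - μ₁ := by rw [hη]; field_simp
  -- key algebraic identities
  have keyβ : σ ^ 2 / 2 * β * (β - 1) + μ₀ * β - (r + lam) = 0 := by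
    linear_combination (1 / 2) * hqβ - β * hσν₀
  have hγeq : σ ^ 2 / 2 * γ * (γ - 1) + μ₀ * γ - (r + lam) = σ * η * γ - lam := by
    linear_combination (1 / 2) * hqγ - γ * hσν₁ - γ * hση
  have hden : lam - σ * η * γ ≠ 0 := sub_ne_zero.mpr hne
  have hE' : E * (lam - σ * η * γ) = lam := by
    rw [hE]; field_simp
  have keyγ : E * (σ ^ 2 / 2 * γ * (γ - 1) + μ₀ * γ - (r + lam)) = -lam := by
    rw [hγeq]; linear_combination -hE'
  -- positivity of exponents
  have hγpos : 0 < γ := by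
    rw [hγ]
    apply div_pos _ hσ
    nlinarith [Real.sqrt_nonneg (ν₁ ^ 2 + 2 * r), hs1]
  have hβpos : 0 < β := by
    rw [hβ]
    apply div_pos _ hσ
    nlinarith [Real.sqrt_nonneg (ν₀ ^ 2 + 2 * (r + lam)), hs0]
  constructor
  · intro x hx
    obtain ⟨hx0, hxu⟩ := hx
    obtain ⟨y, hy0, rfl⟩ : ∃ y : ℝ, 0 < y ∧ x = y * x₁ :=
      ⟨x / x₁, div_pos hx0 hx₁, by field_simp⟩
    have hys : y * x₁ / x₁ = y := by field_simp
    -- first derivative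
    have hd1 : ∀ z : ℝ, 0 < z → HasDerivAt v₀
        (E * (x₁ - K) * γ / x₁ * (z / x₁) ^ (γ - 1)
          + F * β / x₁ * (z / x₁) ^ (β - 1)) z := by
      intro z hz
      rw [hv₀]
      have h1 := stmt5_aux x₁ (E * (x₁ - K)) γ z hx₁ hz
      have h2 := stmt5_aux x₁ F β z hx₁ hz
      exact (h1.add h2).congr_deriv (by ring)
    have hderiv1 : ∀ z ∈ Set.Ioi (0:ℝ), deriv v₀ z =
        E * (x₁ - K) * γ / x₁ * (z / x₁) ^ (γ - 1)
          + F * β / x₁ * (z / x₁) ^ (β - 1) :=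
      fun z hz => (hd1 z hz).deriv
    -- second derivative
    have heq : deriv v₀ =ᶠ[nhds (y * x₁)] fun z =>
        E * (x₁ - K) * γ / x₁ * (z / x₁) ^ (γ - 1)
          + F * β / x₁ * (z / x₁) ^ (β - 1) := by
      filter_upwards [isOpen_Ioi.mem_nhds (Set.mem_Ioi.mpr hx0)] with z hz
      exact hderiv1 z hz
    have hd2 : HasDerivAt (deriv v₀)
        (E * (x₁ - K) * γ / x₁ * (γ - 1) * (y * x₁ / x₁) ^ (γ - 2) / x₁
          + F * β / x₁ * (β - 1) * (y * x₁ / x₁) ^ (β - 2) / x₁) (y * x₁) := by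
      apply HasDerivAt.congr_of_eventuallyEq _ heq
      have h1 := stmt5_aux x₁ (E * (x₁ - K) * γ / x₁) (γ - 1) (y * x₁) hx₁ hx0
      have h2 := stmt5_aux x₁ (F * β / x₁) (β - 1) (y * x₁) hx₁ hx0
      have h3 := h1.add h2
      exact h3.congr_deriv (by rw [show γ - 1 - 1 = γ - 2 by ring, show β - 1 - 1 = β - 2 by ring])
    have hD2 : deriv (deriv v₀) (y * x₁) =
        E * (x₁ - K) * γ / x₁ * (γ - 1) * (y * x₁ / x₁) ^ (γ - 2) / x₁
          + F * β / x₁ * (β - 1) * (y * x₁ / x₁) ^ (β - 2) / x₁ := hd2.deriv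
    rw [hD2, hderiv1 _ hx0, hv₀, hv₁]
    simp only [hys]
    have e1 : y ^ (γ - 1) = y ^ γ / y := by
      rw [Real.rpow_sub hy0, Real.rpow_one]
    have e2 : y ^ (γ - 2) = y ^ γ / (y * y) := by
      rw [show γ - 2 = γ - 1 - 1 by ring, Real.rpow_sub hy0, Real.rpow_sub hy0,
        Real.rpow_one]
      ring
    have e3 : y ^ (β - 1) = y ^ β / y := by
      rw [Real.rpow_sub hy0, Real.rpow_one]
    have e4 : y ^ (β - 2) = y ^ β / (y * y) := by
      rw [show β - 2 = β - 1 - 1 by ring, Real.rpow_sub hy0, Real.rpow_sub hy0,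
        Real.rpow_one]
      ring
    rw [e1, e2, e3, e4]
    set a := y ^ γ with ha
    set b := y ^ β with hb
    field_simp
    linear_combination
      (2 * (x₁ - K) * a * keyγ + 2 * F * b * keyβ)
  · -- limit at 0+
    have hc : ContinuousAt v₀ 0 := by
      rw [hv₀]
      have hcd : ContinuousAt (fun x : ℝ => x / x₁) 0 :=
        (continuous_id.div_const x₁).continuousAt
      have c1 : ContinuousAt (fun x : ℝ => (x / x₁) ^ γ) 0 := by
        have h := ContinuousAt.comp (g := fun t : ℝ => t ^ γ) (f := fun x : ℝ => x / x₁)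
          (x := 0) (Real.continuousAt_rpow_const ((0:ℝ) / x₁) γ (Or.inr hγpos.le)) hcd
        exact h
      have c2 : ContinuousAt (fun x : ℝ => (x / x₁) ^ β) 0 := by
        have h := ContinuousAt.comp (g := fun t : ℝ => t ^ β) (f := fun x : ℝ => x / x₁)
          (x := 0) (Real.continuousAt_rpow_const ((0:ℝ) / x₁) β (Or.inr hβpos.le)) hcd
        exact h
      exact ((c1.const_mul _).add (c2.const_mul _))
    have hv00 : v₀ 0 = 0 := by
      rw [hv₀]
      simp [Real.zero_rpow hγpos.ne', Real.zero_rpow hβpos.ne']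
    have := hc.continuousWithinAt (s := Set.Ioi 0)
    rw [ContinuousWithinAt, hv00] at this
    exact this
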